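/- arXiv:1811.07714 — 3 statements merged into one kernel-verified Lean document; each statement's English description precedes it below -/
import Mathlib

section
/- Let K be a field, let V and W be finite-dimensional K-vector spaces, and let f : V →ₗ[K] W be a linear map of rank r (i.e., r = dim of the range of f). Then for every k, the induced map ⋀^k f : ⋀^k V →ₗ[K] ⋀^k W on k-th exterior powers has rank equal to the binomial coefficient C(r, k). -/
/-- The linear map induced on `k`-th exterior powers by a linear map `f : V →ₗ[K] W`. -/
noncomputable def exteriorPowerMap (K : Type*) [Field K] {V W : Type*}
    [AddCommGroup V] [Module K V] [AddCommGroup W] [Module K W]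
    (k : ℕ) (f : V →ₗ[K] W) : ⋀[K]^k V →ₗ[K] ⋀[K]^k W :=
  (ExteriorAlgebra.map f).toLinearMap.restrict
    (p := ⋀[K]^k V) (q := ⋀[K]^k W) (by
      intro x hx
      rw [← ExteriorAlgebra.ιMulti_span_fixedDegree] at hx
      induction hx using Submodule.span_induction with
      | mem y hy =>
          obtain ⟨mvec, rfl⟩ := hy
          rw [AlgHom.toLinearMap_apply, ExteriorAlgebra.map_apply_ιMulti]
          exact ExteriorAlgebra.ιMulti_range K k (Set.mem_range_self _)
      | zero => simp
      | add y z _ _ hy hz => rw [map_add]; exact Submodule.add_mem _ hy hz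
      | smul c y _ hy => rw [map_smul]; exact Submodule.smul_mem _ _ hy)



open ExteriorAlgebra

section Aux

variable {K : Type*} [Field K] {V : Type*} [AddCommGroup V] [Module K V]
  {W : Type*} [AddCommGroup W] [Module K W] {U : Type*} [AddCommGroup U] [Module K U]

/-- The alternating form on `V` given by the determinant of the `S`-minor of coordinates. -/
noncomputable def auxForm {n : ℕ} (b : Module.Basis (Fin n) K V) (k : ℕ) (S : Finset (Fin n))
    (hS : S.card = k) : V [⋀^Fin k]→ₗ[K] K :=
  (Matrix.detRowAlternating (R := K) (n := Fin k)).compLinearMap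
    (LinearMap.pi fun j => b.coord (S.orderEmbOfFin hS j))

lemma auxForm_apply_basis {n k : ℕ} (b : Module.Basis (Fin n) K V) (S T : Finset (Fin n))
    (hS : S.card = k) (hT : T.card = k) :
    auxForm b k S hS (fun i => b (T.orderEmbOfFin hT i)) = if S = T then 1 else 0 := by
  rw [auxForm, AlternatingMap.compLinearMap_apply]
  show Matrix.det (Matrix.of fun i j => _) = _
  by_cases h : S = T
  · subst h
    obtain rfl : hT = hS := rfl
    rw [if_pos rfl]
    have h1 : (Matrix.of fun i j =>
        ((fun j => b.coord (S.orderEmbOfFin hT j)) j) (b (S.orderEmbOfFin hT i)))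
        = (1 : Matrix (Fin k) (Fin k) K) := by
      ext i j
      simp only [Matrix.of_apply, Module.Basis.coord_apply, Module.Basis.repr_self, Finsupp.single_apply,
        Matrix.one_apply, (S.orderEmbOfFin hT).injective.eq_iff]
    exact (congrArg Matrix.det h1).trans Matrix.det_one
  · rw [if_neg h]
    have hTS : ¬ T ⊆ S := fun hsub =>
      h (Finset.eq_of_subset_of_card_le hsub (by rw [hS, hT])).symm
    obtain ⟨t, htT, htS⟩ := Finset.not_subset.1 hTS
    obtain ⟨i, hi⟩ : t ∈ Set.range (T.orderEmbOfFin hT) := by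
      rw [Finset.range_orderEmbOfFin]; exact htT
    apply Matrix.det_eq_zero_of_row_eq_zero i
    intro j
    simp only [Matrix.of_apply, Module.Basis.coord_apply, Module.Basis.repr_self, Finsupp.single_apply]
    simp only [Finsupp.lapply_apply, LinearEquiv.coe_coe, Module.Basis.repr_self, Finsupp.single_apply]
    rw [if_neg]
    intro hc
    exact htS (by rw [← hi, hc]; exact S.orderEmbOfFin_mem hS j)

/-- Lift of `auxForm` to a linear functional on the exterior algebra. -/
noncomputable def auxDual {n : ℕ} (b : Module.Basis (Fin n) K V) (k : ℕ) (S : Finset (Fin n))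
    (hS : S.card = k) : ExteriorAlgebra K V →ₗ[K] K :=
  ExteriorAlgebra.liftAlternating
    (Function.update (fun i => (0 : V [⋀^Fin i]→ₗ[K] K)) k (auxForm b k S hS))

lemma auxDual_ιMulti {n : ℕ} (b : Module.Basis (Fin n) K V) (k : ℕ) (S : Finset (Fin n))
    (hS : S.card = k) (v : Fin k → V) :
    auxDual b k S hS (ιMulti K k v) = auxForm b k S hS v := by
  rw [auxDual, ExteriorAlgebra.liftAlternating_apply_ιMulti, Function.update_self]

/-- The family of wedges of basis vectors indexed by `k`-element subsets. -/
noncomputable def auxFam {n : ℕ} (b : Module.Basis (Fin n) K V) (k : ℕ)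
    (S : {s : Finset (Fin n) // s.card = k}) : ExteriorAlgebra K V :=
  ιMulti K k fun i => b (S.1.orderEmbOfFin S.2 i)

lemma auxFam_li {n : ℕ} (b : Module.Basis (Fin n) K V) (k : ℕ) :
    LinearIndependent K (auxFam b k) := by
  rw [Fintype.linearIndependent_iff]
  intro c hc T
  have h0 := congrArg (auxDual b k T.1 T.2) hc
  rw [map_sum, map_zero] at h0
  simp only [map_smul, auxFam, auxDual_ιMulti, auxForm_apply_basis, smul_eq_mul,
    mul_ite, mul_one, mul_zero] at h0
  have h2 : ∀ S : {s : Finset (Fin n) // s.card = k},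
      (if T.1 = S.1 then c S else 0) = if T = S then c S else 0 := fun S => by
    simp [Subtype.ext_iff]
  rw [Finset.sum_congr rfl (fun S _ => h2 S), Finset.sum_ite_eq] at h0
  simpa using h0

lemma auxFam_mem {n : ℕ} (b : Module.Basis (Fin n) K V) (k : ℕ)
    (S : {s : Finset (Fin n) // s.card = k}) : auxFam b k S ∈ ⋀[K]^k V :=
  ExteriorAlgebra.ιMulti_range K k (Set.mem_range_self _)

lemma ιMulti_mem_span_auxFam {n : ℕ} (b : Module.Basis (Fin n) K V) (k : ℕ) (v : Fin k → V) :
    ιMulti K k v ∈ Submodule.span K (Set.range (auxFam b k)) := by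
  classical
  have hv : ιMulti K k v = ιMulti K k (fun i => ∑ j, b.repr (v i) j • b j) := by
    congr 1
    funext i
    exact (b.sum_repr (v i)).symm
  rw [hv]
  rw [show (ιMulti K k (fun i => ∑ j, b.repr (v i) j • b j) : ExteriorAlgebra K V)
      = ∑ r : Fin k → Fin n, ιMulti K k (fun i => b.repr (v i) (r i) • b (r i)) from
    MultilinearMap.map_sum (ιMulti K k).toMultilinearMap
      (α := fun _ => Fin n) (g := fun i j => b.repr (v i) j • b j)]
  apply Submodule.sum_mem
  intro r _
  rw [show (ιMulti K k (fun i => b.repr (v i) (r i) • b (r i)) : ExteriorAlgebra K V)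
      = (∏ i, b.repr (v i) (r i)) • ιMulti K k (fun i => b (r i)) from
    MultilinearMap.map_smul_univ (ιMulti K k).toMultilinearMap _ _]
  apply Submodule.smul_mem
  by_cases hr : Function.Injective r
  · have hS : (Finset.univ.image r).card = k := by
      rw [Finset.card_image_of_injective _ hr, Finset.card_univ, Fintype.card_fin]
    set S : Finset (Fin n) := Finset.univ.image r with hSdef
    have hrange : Set.range r = ↑S := by
      rw [hSdef, Finset.coe_image, Finset.coe_univ, Set.image_univ]
    let e : Fin k ≃ S := (Equiv.ofInjective r hr).trans (Equiv.setCongr hrange)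
    let m := S.orderIsoOfFin hS
    let σ : Equiv.Perm (Fin k) := e.trans (m.symm : ↥S ≃o Fin k).toEquiv
    have key : (fun i => b (S.orderEmbOfFin hS i)) ∘ σ = fun i => b (r i) := by
      funext i
      simp only [Function.comp_apply]
      congr 1
      have h4 : S.orderEmbOfFin hS (σ i) = ↑(m (σ i)) :=
        (Finset.coe_orderIsoOfFin_apply S hS (σ i)).symm
      rw [h4]
      show ↑(m (m.symm (e i))) = r i
      rw [OrderIso.apply_symm_apply]
      rfl
    have hperm : ιMulti K k (fun i => b (r i))
        = Equiv.Perm.sign σ • ιMulti K k (fun i => b (S.orderEmbOfFin hS i)) := by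
      rw [← key]
      exact AlternatingMap.map_perm (ιMulti K k) _ σ
    rw [hperm]
    rcases Int.units_eq_one_or (Equiv.Perm.sign σ) with hσ | hσ <;> rw [hσ]
    · rw [one_smul]
      exact Submodule.subset_span ⟨⟨S, hS⟩, rfl⟩
    · rw [Units.neg_smul, one_smul]
      exact Submodule.neg_mem _ (Submodule.subset_span ⟨⟨S, hS⟩, rfl⟩)
  · have : ¬ Function.Injective (fun i => b (r i)) := by
      intro hinj
      exact hr fun i j hij => hinj (by simp only [hij])
    rw [AlternatingMap.map_eq_zero_of_not_injective _ _ this]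
    exact Submodule.zero_mem _

lemma span_auxFam {n : ℕ} (b : Module.Basis (Fin n) K V) (k : ℕ) :
    Submodule.span K (Set.range (auxFam b k)) = ⋀[K]^k V := by
  apply le_antisymm
  · rw [Submodule.span_le]
    rintro _ ⟨S, rfl⟩
    exact auxFam_mem b k S
  · rw [← ExteriorAlgebra.ιMulti_span_fixedDegree, Submodule.span_le]
    rintro _ ⟨v, rfl⟩
    exact ιMulti_mem_span_auxFam b k v

theorem finrank_exteriorPower (K V : Type*) [Field K] [AddCommGroup V] [Module K V]
    [FiniteDimensional K V] (k : ℕ) :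
    Module.finrank K (⋀[K]^k V) = Nat.choose (Module.finrank K V) k := by
  classical
  set n := Module.finrank K V with hn
  let b := Module.finBasis K V
  let x : {s : Finset (Fin n) // s.card = k} → (⋀[K]^k V) :=
    fun S => ⟨auxFam b k S, auxFam_mem b k S⟩
  have hcomp : (⋀[K]^k V).subtype ∘ x = auxFam b k := rfl
  have hli : LinearIndependent K x :=
    LinearIndependent.of_comp ((⋀[K]^k V).subtype) (by rw [hcomp]; exact auxFam_li b k)
  have hspan : ⊤ ≤ Submodule.span K (Set.range x) := by
    intro y _
    have hmem : (y : ExteriorAlgebra K V) ∈ Submodule.map ((⋀[K]^k V).subtype)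
        (Submodule.span K (Set.range x)) := by
      rw [Submodule.map_span, ← Set.range_comp, hcomp, span_auxFam]
      exact y.2
    obtain ⟨z, hz, hzy⟩ := hmem
    rwa [show z = y from Subtype.ext hzy] at hz
  let B : Module.Basis {s : Finset (Fin n) // s.card = k} K (⋀[K]^k V) := Module.Basis.mk hli hspan
  rw [Module.finrank_eq_card_basis B, Fintype.card_finset_len, Fintype.card_fin]

lemma exteriorPowerMap_coe (k : ℕ) (f : V →ₗ[K] W) (x : ⋀[K]^k V) :
    (exteriorPowerMap K k f x : ExteriorAlgebra K W) = ExteriorAlgebra.map f x := rfl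

lemma exteriorPowerMap_comp (k : ℕ) (f : V →ₗ[K] W) (g : W →ₗ[K] U) :
    exteriorPowerMap K k (g ∘ₗ f) = (exteriorPowerMap K k g) ∘ₗ (exteriorPowerMap K k f) := by
  apply LinearMap.ext
  intro x
  apply Subtype.ext
  rw [LinearMap.comp_apply]
  rw [exteriorPowerMap_coe, exteriorPowerMap_coe, exteriorPowerMap_coe]
  rw [← ExteriorAlgebra.map_comp_map]
  rfl

lemma exteriorPowerMap_id (k : ℕ) :
    exteriorPowerMap K k (LinearMap.id : V →ₗ[K] V) = LinearMap.id := by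
  apply LinearMap.ext
  intro x
  apply Subtype.ext
  rw [exteriorPowerMap_coe, ExteriorAlgebra.map_id]
  rfl

lemma exteriorPowerMap_surjective (k : ℕ) (f : V →ₗ[K] W) (hf : Function.Surjective f) :
    Function.Surjective (exteriorPowerMap K k f) := by
  have hsub : (⋀[K]^k W) ≤ Submodule.map (ExteriorAlgebra.map f).toLinearMap (⋀[K]^k V) := by
    rw [← ExteriorAlgebra.ιMulti_span_fixedDegree, Submodule.span_le]
    rintro _ ⟨w, rfl⟩
    refine ⟨ιMulti K k (fun i => Function.surjInv hf (w i)),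
      ExteriorAlgebra.ιMulti_range K k (Set.mem_range_self _), ?_⟩
    rw [AlgHom.toLinearMap_apply, ExteriorAlgebra.map_apply_ιMulti]
    congr 1
    funext i
    exact Function.surjInv_eq hf (w i)
  rintro ⟨y, hy⟩
  obtain ⟨x, hx, hxy⟩ := hsub hy
  exact ⟨⟨x, hx⟩, Subtype.ext hxy⟩

lemma exteriorPowerMap_injective (k : ℕ) (f : V →ₗ[K] W) (hf : Function.Injective f) :
    Function.Injective (exteriorPowerMap K k f) := by
  obtain ⟨g, hg⟩ := f.exists_leftInverse_of_injective (LinearMap.ker_eq_bot.2 hf)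
  have hcomp : (exteriorPowerMap K k g) ∘ₗ (exteriorPowerMap K k f) = LinearMap.id := by
    rw [← exteriorPowerMap_comp, hg, exteriorPowerMap_id]
  have : Function.LeftInverse (exteriorPowerMap K k g) (exteriorPowerMap K k f) := fun x => by
    rw [← LinearMap.comp_apply, hcomp, LinearMap.id_apply]
  exact this.injective

end Aux

/-- If `f : V →ₗ[K] W` has rank `r`, then the induced map `⋀^k f` on `k`-th exterior powers
has rank `C(r, k)`. -/
theorem rank_exteriorPowerMap (K : Type*) [Field K] (V W : Type*)
    [AddCommGroup V] [Module K V] [AddCommGroup W] [Module K W]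
    [FiniteDimensional K V] [FiniteDimensional K W]
    (f : V →ₗ[K] W) (r : ℕ) (hr : Module.finrank K (LinearMap.range f) = r) (k : ℕ) :
    Module.finrank K (LinearMap.range (exteriorPowerMap K k f)) = Nat.choose r k := by
  have hfac : f = (LinearMap.range f).subtype ∘ₗ f.rangeRestrict :=
    (LinearMap.subtype_comp_codRestrict f (LinearMap.range f) _).symm
  have h1 : LinearMap.range (exteriorPowerMap K k f)
      = LinearMap.range (exteriorPowerMap K k (LinearMap.range f).subtype) := by
    conv_lhs => rw [hfac]
    rw [exteriorPowerMap_comp]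
    exact LinearMap.range_comp_of_range_eq_top _
      (LinearMap.range_eq_top.2 (exteriorPowerMap_surjective k _ f.surjective_rangeRestrict))
  rw [h1, LinearMap.finrank_range_of_inj (f := exteriorPowerMap K k (LinearMap.range f).subtype)
    (exteriorPowerMap_injective k _ (Submodule.injective_subtype _)),
    finrank_exteriorPower K (LinearMap.range f) k, hr]
end

section
/- Let K be an algebraically closed field of characteristic zero, and in the polynomial ring K[T₁, …, T₁₁] set F = T₃T₈ + T₄T₉ + T₁T₇ and G = T₅T₉ + T₆T₁₁ + T₂T₇. Then the quotient ring K[T₁, …, T₁₁]/(F, G) is an integral domain (equivalently, the affine variety {F = G = 0} ⊂ K¹¹ is irreducible and reduced). -/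
set_option maxSynthPendingDepth 5
set_option maxHeartbeats 1000000
set_option synthInstance.maxHeartbeats 400000


open MvPolynomial

/-- `F = T₃T₈ + T₄T₉ + T₁T₇` (variables `T₁, …, T₁₁` indexed by `Fin 11`, `Tᵢ = X (i-1)`). -/
noncomputable def Fpoly (K : Type*) [Field K] : MvPolynomial (Fin 11) K :=
  X 2 * X 7 + X 3 * X 8 + X 0 * X 6

/-- `G = T₅T₉ + T₆T₁₁ + T₂T₇`. -/
noncomputable def Gpoly (K : Type*) [Field K] : MvPolynomial (Fin 11) K :=
  X 4 * X 8 + X 5 * X 10 + X 1 * X 6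


section KeyLemma



theorem prime_C_mul_X_add_C {D : Type*} [CommRing D] [IsDomain D] {a c : D}
    (ha : Prime a) (hc : ¬ a ∣ c) :
    Prime (Polynomial.C a * Polynomial.X + Polynomial.C c) := by
  set p : (Polynomial D) := Polynomial.C a * Polynomial.X + Polynomial.C c with hp
  have hCa : Prime (Polynomial.C a) := Polynomial.prime_C_iff.mpr ha
  let F := FractionRing D
  let i : D →+* F := algebraMap D F
  have hi : Function.Injective i := IsFractionRing.injective D F
  have hia : i a ≠ 0 := fun h => ha.ne_zero (hi (by simpa using h))
  set t : F := - i c / i a with ht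
  set φ : (Polynomial D) →+* F := Polynomial.eval₂RingHom i t with hφ
  have hφC : ∀ d : D, φ (Polynomial.C d) = i d := fun d => by simp [hφ]
  have hφX : φ Polynomial.X = t := by simp [hφ]
  have hφp : φ p = 0 := by
    rw [hp, map_add, map_mul, hφC, hφC, hφX, ht]
    rw [mul_div_assoc', mul_comm, mul_div_assoc, div_self hia]
    ring
  have key : ∀ n (f : (Polynomial D)), f.natDegree ≤ n → φ f = 0 → p ∣ f := by
    intro n
    induction n with
    | zero =>
      intro f hdeg hf0
      rw [Polynomial.eq_C_of_natDegree_le_zero hdeg] at hf0 ⊢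
      have h1 : f.coeff 0 = 0 := hi (by rw [hφC] at hf0; simpa using hf0)
      simp [h1]
    | succ n ih =>
      intro f hdeg hf0
      by_cases h0 : f.natDegree ≤ n
      · exact ih f h0 hf0
      have hdn : f.natDegree = n + 1 := le_antisymm hdeg (not_le.1 h0)
      set b := f.leadingCoeff with hb
      set f' : (Polynomial D) := Polynomial.C a * f - Polynomial.C b * Polynomial.X ^ n * p with hf'
      have hrel : Polynomial.C a * f = f' + Polynomial.C b * Polynomial.X ^ n * p := by rw [hf']; ring
      have hdeg' : f'.natDegree ≤ n := by
        apply Polynomial.natDegree_le_iff_coeff_eq_zero.mpr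
        intro m hm
        have e2 : Polynomial.C b * Polynomial.X ^ n * p = Polynomial.C (b*a) * Polynomial.X ^ (n+1) + Polynomial.C (b*c) * Polynomial.X ^ n := by
          rw [hp, map_mul, map_mul]; ring
        rcases eq_or_lt_of_le (Nat.succ_le_of_lt hm) with hm1 | hm1
        · subst hm1
          have hcf : f.coeff (n+1) = b := by rw [hb, Polynomial.leadingCoeff, hdn]
          rw [hf', e2]
          simp [-map_mul, -Polynomial.C_mul, Polynomial.coeff_C_mul, Polynomial.coeff_X_pow, hcf]
          ring
        · have hcf : f.coeff m = 0 := Polynomial.coeff_eq_zero_of_natDegree_lt (by omega)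
          have h1 : m ≠ n+1 := by omega
          have h2 : m ≠ n := by omega
          rw [hf', e2]
          simp [-map_mul, -Polynomial.C_mul, Polynomial.coeff_C_mul, Polynomial.coeff_X_pow, hcf, h1, h2]
      have hφf' : φ f' = 0 := by
        rw [hf', map_sub, map_mul, map_mul, hφp, hf0]
        ring
      obtain ⟨q, hq⟩ := ih f' hdeg' hφf'
      have hq2 : Polynomial.C a * f = p * (q + Polynomial.C b * Polynomial.X ^ n) := by rw [hrel, hq]; ring
      have hdvd : Polynomial.C a ∣ p * (q + Polynomial.C b * Polynomial.X ^ n) := ⟨f, hq2.symm⟩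
      rcases hCa.2.2 _ _ hdvd with hcp | hcq
      · exfalso
        have hcc : Polynomial.C a ∣ Polynomial.C c := by
          have : Polynomial.C c = p - Polynomial.C a * Polynomial.X := by rw [hp]; ring
          rw [this]
          exact dvd_sub hcp (dvd_mul_right _ _)
        obtain ⟨r, hr⟩ := hcc
        refine hc ⟨r.coeff 0, ?_⟩
        have := congrArg (fun q => Polynomial.coeff q 0) hr
        simpa [Polynomial.coeff_C_mul] using this
      · obtain ⟨q3, hq3⟩ := hcq
        have hCane : (Polynomial.C a : (Polynomial D)) ≠ 0 := by
          simpa using ha.ne_zero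
        refine ⟨q3, mul_left_cancel₀ hCane ?_⟩
        rw [hq2, hq3]; ring
  have hpne : p ≠ 0 := by
    intro h
    apply ha.ne_zero
    have := congrArg (fun q => Polynomial.coeff q 1) h
    simpa [hp, Polynomial.coeff_C_mul] using this
  refine ⟨hpne, ?_, fun f g hfg => ?_⟩
  · intro hu
    have h1 : IsUnit (φ p) := hu.map φ
    rw [hφp] at h1
    exact not_isUnit_zero h1
  · have h1 : φ (f*g) = 0 := by
      obtain ⟨q, hq⟩ := hfg; rw [hq, map_mul, hφp]; ring
    rw [map_mul] at h1
    rcases mul_eq_zero.mp h1 with h | h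
    · exact Or.inl (key f.natDegree f le_rfl h)
    · exact Or.inr (key g.natDegree g le_rfl h)

theorem isDomain_quot_C_mul_X_add_C {D : Type*} [CommRing D] [IsDomain D] {a c : D}
    (ha : Prime a) (hc : ¬ a ∣ c) :
    IsDomain (Polynomial D ⧸ Ideal.span {Polynomial.C a * Polynomial.X + Polynomial.C c}) := by
  have hP := prime_C_mul_X_add_C ha hc
  have h2 : (Ideal.span {Polynomial.C a * Polynomial.X + Polynomial.C c}).IsPrime :=
    (Ideal.span_singleton_prime hP.ne_zero).mpr hP
  exact (Ideal.Quotient.isDomain_iff_prime _).mpr h2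

end KeyLemma

noncomputable section Main

variable (K : Type*) [Field K]

/-- permutation of the 11 variables -/
def σperm : Equiv.Perm (Fin 11) :=
  ⟨![4,5,1,6,7,3,8,0,9,10,2], ![7,2,10,5,0,1,3,4,6,8,9], by decide, by decide⟩

abbrev B7 := MvPolynomial (Fin 7) K

/-- `B7[w]` -/
abbrev Bw := Polynomial (B7 K)
/-- `B7[w][z]` -/
abbrev Bz := Polynomial (Bw K)
/-- `B7[w][z][x]` -/
abbrev Bx := Polynomial (Bz K)
/-- `B7[w][z][x][Y]` -/
abbrev T4 := Polynomial (Bx K)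

def Φ : MvPolynomial (Fin 11) K ≃+* T4 K :=
  (((renameEquiv K (σperm)).toRingEquiv.trans (finSuccEquiv K 10).toRingEquiv).trans
    (Polynomial.mapEquiv (finSuccEquiv K 9).toRingEquiv)).trans <|
  (Polynomial.mapEquiv (Polynomial.mapEquiv (finSuccEquiv K 8).toRingEquiv)).trans
    (Polynomial.mapEquiv (Polynomial.mapEquiv (Polynomial.mapEquiv (finSuccEquiv K 7).toRingEquiv)))

def cF : B7 K := X 2 * X 5 + X 0 * X 4
def cG : B7 K := X 3 * X 5 + X 1 * X 4

/-- image of `G` -/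
def G2 : Bz K := Polynomial.C Polynomial.X * Polynomial.X + Polynomial.C (Polynomial.C (cG K))
def G3 : T4 K := Polynomial.C (Polynomial.C (G2 K))
def F3 : T4 K :=
  Polynomial.C Polynomial.X * Polynomial.X +
    Polynomial.C (Polynomial.C (Polynomial.C (Polynomial.C (cF K))))

lemma Phi_X_deep (i : Fin 11) (j1 : Fin 10) (j2 : Fin 9) (j3 : Fin 8) (j4 : Fin 7)
    (h1 : σperm i = j1.succ) (h2 : j1 = j2.succ) (h3 : j2 = j3.succ) (h4 : j3 = j4.succ) :
    Φ K (X i) = Polynomial.C (Polynomial.C (Polynomial.C (Polynomial.C (X j4)))) := by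
  rw [Φ]
  simp only [RingEquiv.trans_apply, AlgEquiv.toRingEquiv_eq_coe, AlgEquiv.coe_ringEquiv,
    renameEquiv_apply, rename_X]
  rw [h1, finSuccEquiv_X_succ]
  simp only [Polynomial.mapEquiv_apply, Polynomial.map_C, RingEquiv.toRingHom_eq_coe,
    RingHom.coe_coe, AlgEquiv.coe_ringEquiv]
  rw [h2, finSuccEquiv_X_succ]
  simp only [Polynomial.mapEquiv_apply, Polynomial.map_C, RingEquiv.toRingHom_eq_coe,
    RingHom.coe_coe, AlgEquiv.coe_ringEquiv]
  rw [h3, finSuccEquiv_X_succ]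
  simp only [Polynomial.mapEquiv_apply, Polynomial.map_C, RingEquiv.toRingHom_eq_coe,
    RingHom.coe_coe, AlgEquiv.coe_ringEquiv]
  rw [h4, finSuccEquiv_X_succ]

lemma Phi_X0 : Φ K (X (7 : Fin 11)) = Polynomial.X := by
  rw [Φ]
  simp only [RingEquiv.trans_apply, AlgEquiv.toRingEquiv_eq_coe, AlgEquiv.coe_ringEquiv,
    renameEquiv_apply, rename_X]
  rw [show σperm (7 : Fin 11) = 0 by decide, finSuccEquiv_X_zero]
  simp [Polynomial.mapEquiv_apply]

lemma Phi_X1 : Φ K (X (2 : Fin 11)) = Polynomial.C Polynomial.X := by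
  rw [Φ]
  simp only [RingEquiv.trans_apply, AlgEquiv.toRingEquiv_eq_coe, AlgEquiv.coe_ringEquiv,
    renameEquiv_apply, rename_X]
  rw [show σperm (2 : Fin 11) = Fin.succ 0 by decide, finSuccEquiv_X_succ]
  simp only [Polynomial.mapEquiv_apply, Polynomial.map_C, RingEquiv.toRingHom_eq_coe,
    RingHom.coe_coe, AlgEquiv.coe_ringEquiv]
  rw [finSuccEquiv_X_zero]
  simp [Polynomial.mapEquiv_apply]

lemma Phi_X2 : Φ K (X (10 : Fin 11)) = Polynomial.C (Polynomial.C Polynomial.X) := by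
  rw [Φ]
  simp only [RingEquiv.trans_apply, AlgEquiv.toRingEquiv_eq_coe, AlgEquiv.coe_ringEquiv,
    renameEquiv_apply, rename_X]
  rw [show σperm (10 : Fin 11) = Fin.succ 1 by decide, finSuccEquiv_X_succ]
  simp only [Polynomial.mapEquiv_apply, Polynomial.map_C, RingEquiv.toRingHom_eq_coe,
    RingHom.coe_coe, AlgEquiv.coe_ringEquiv]
  rw [show (1 : Fin 10) = Fin.succ 0 by decide, finSuccEquiv_X_succ]
  simp only [Polynomial.mapEquiv_apply, Polynomial.map_C, RingEquiv.toRingHom_eq_coe,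
    RingHom.coe_coe, AlgEquiv.coe_ringEquiv]
  rw [finSuccEquiv_X_zero]
  simp [Polynomial.mapEquiv_apply]

lemma Phi_X3 : Φ K (X (5 : Fin 11)) = Polynomial.C (Polynomial.C (Polynomial.C Polynomial.X)) := by
  rw [Φ]
  simp only [RingEquiv.trans_apply, AlgEquiv.toRingEquiv_eq_coe, AlgEquiv.coe_ringEquiv,
    renameEquiv_apply, rename_X]
  rw [show σperm (5 : Fin 11) = Fin.succ 2 by decide, finSuccEquiv_X_succ]
  simp only [Polynomial.mapEquiv_apply, Polynomial.map_C, RingEquiv.toRingHom_eq_coe,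
    RingHom.coe_coe, AlgEquiv.coe_ringEquiv]
  rw [show (2 : Fin 10) = Fin.succ 1 by decide, finSuccEquiv_X_succ]
  simp only [Polynomial.mapEquiv_apply, Polynomial.map_C, RingEquiv.toRingHom_eq_coe,
    RingHom.coe_coe, AlgEquiv.coe_ringEquiv]
  rw [show (1 : Fin 9) = Fin.succ 0 by decide, finSuccEquiv_X_succ]
  simp only [Polynomial.mapEquiv_apply, Polynomial.map_C, RingEquiv.toRingHom_eq_coe,
    RingHom.coe_coe, AlgEquiv.coe_ringEquiv]
  rw [finSuccEquiv_X_zero]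

set_option maxHeartbeats 1000000 in
set_option synthInstance.maxHeartbeats 400000 in
lemma Phi_F : Φ K (Fpoly K) = F3 K := by
  rw [Fpoly, map_add, map_add, map_mul, map_mul, map_mul, Phi_X1, Phi_X0,
    Phi_X_deep K 3 5 4 3 2 (by decide) (by decide) (by decide) (by decide),
    Phi_X_deep K 8 8 7 6 5 (by decide) (by decide) (by decide) (by decide),
    Phi_X_deep K 0 3 2 1 0 (by decide) (by decide) (by decide) (by decide),
    Phi_X_deep K 6 7 6 5 4 (by decide) (by decide) (by decide) (by decide),
    F3, cF]
  simp only [map_add, map_mul]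
  abel

set_option maxHeartbeats 1000000 in
set_option synthInstance.maxHeartbeats 400000 in
lemma Phi_G : Φ K (Gpoly K) = G3 K := by
  rw [Gpoly, map_add, map_add, map_mul, map_mul, map_mul, Phi_X3, Phi_X2,
    Phi_X_deep K 4 6 5 4 3 (by decide) (by decide) (by decide) (by decide),
    Phi_X_deep K 8 8 7 6 5 (by decide) (by decide) (by decide) (by decide),
    Phi_X_deep K 1 4 3 2 1 (by decide) (by decide) (by decide) (by decide),
    Phi_X_deep K 6 7 6 5 4 (by decide) (by decide) (by decide) (by decide),
    G3, G2, cG]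
  simp only [map_add, map_mul]
  abel

end Main

set_option maxHeartbeats 2000000 in
set_option synthInstance.maxHeartbeats 1000000 in
/-- The ring `K[T₁, …, T₁₁]/(F, G)` is an integral domain: the affine cone
`X̄ = {F = G = 0} ⊂ K¹¹` is irreducible and reduced. -/
theorem quotient_FG_isDomain (K : Type*) [Field K] [IsAlgClosed K] [CharZero K] :
    IsDomain (MvPolynomial (Fin 11) K ⧸ Ideal.span {Fpoly K, Gpoly K}) := by
  classical
  -- nonvanishing evaluations
  have hcGne : cG K ≠ 0 := by
    intro h
    have h2 := congrArg (MvPolynomial.eval (fun _ => (1:K))) h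
    rw [map_zero, cG] at h2
    simp only [map_add, map_mul, MvPolynomial.eval_X] at h2
    norm_num at h2
  have hcG : ¬ (Polynomial.X : Bw K) ∣ Polynomial.C (cG K) := by
    rw [Polynomial.X_dvd_iff, Polynomial.coeff_C]
    simpa using hcGne
  have hG2 : Prime (G2 K) := prime_C_mul_X_add_C Polynomial.prime_X hcG
  set I₀ : Ideal (Bz K) := Ideal.span {G2 K} with hI₀
  have hI₀prime : I₀.IsPrime := (Ideal.span_singleton_prime hG2.ne_zero).mpr hG2
  haveI hD1 : IsDomain (Bz K ⧸ I₀) := (Ideal.Quotient.isDomain_iff_prime _).mpr hI₀prime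
  -- the element e
  set e : Bz K ⧸ I₀ := Ideal.Quotient.mk I₀ (Polynomial.C (Polynomial.C (cF K))) with he
  have hndvd : ¬ (G2 K) ∣ Polynomial.C (Polynomial.C (cF K)) := by
    intro ⟨q, hq⟩
    let v : Fin 7 → K := ![0,0,1,0,0,1,0]
    let φ1 : B7 K →+* K := (MvPolynomial.eval v)
    let φ2 : Bw K →+* K := Polynomial.eval₂RingHom φ1 0
    let φ3 : Bz K →+* K := Polynomial.eval₂RingHom φ2 0
    have hv0 : v 0 = 0 := rfl
    have hv1 : v 1 = 0 := rfl
    have hv2 : v 2 = 1 := rfl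
    have hv3 : v 3 = 0 := rfl
    have hv4 : v 4 = 0 := rfl
    have hv5 : v 5 = 1 := rfl
    have hv : MvPolynomial.eval v (cF K) = 1 ∧ MvPolynomial.eval v (cG K) = 0 := by
      constructor
      · rw [cF]
        simp only [map_add, map_mul, MvPolynomial.eval_X]
        rw [show v 2 = 1 from rfl, show v 5 = 1 from rfl, show v 0 = 0 from rfl,
          show v 4 = 0 from rfl]
        ring
      · rw [cG]
        simp only [map_add, map_mul, MvPolynomial.eval_X]
        rw [show v 3 = 0 from rfl, show v 1 = 0 from rfl]
        ring
    have h1 : φ3 (Polynomial.C (Polynomial.C (cF K))) = 1 := by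
      simp only [φ3, φ2, φ1, Polynomial.coe_eval₂RingHom, Polynomial.eval₂_C]
      exact hv.1
    have h2 : φ3 (G2 K) = 0 := by
      rw [G2]
      simp only [φ3, φ2, φ1, Polynomial.coe_eval₂RingHom, Polynomial.eval₂_add,
        Polynomial.eval₂_mul, Polynomial.eval₂_C, Polynomial.eval₂_X]
      rw [hv.2]
      ring
    rw [hq, map_mul, h2, zero_mul] at h1
    exact (one_ne_zero : (1:K) ≠ 0) h1.symm
  have hene : e ≠ 0 := by
    rw [he, Ne, Ideal.Quotient.eq_zero_iff_mem, hI₀, Ideal.mem_span_singleton]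
    exact hndvd
  have hce : ¬ (Polynomial.X : Polynomial (Bz K ⧸ I₀)) ∣ Polynomial.C e := by
    rw [Polynomial.X_dvd_iff, Polynomial.coeff_C]
    simpa using hene
  -- the final quadric over D2
  set F4 : Polynomial (Polynomial (Bz K ⧸ I₀)) :=
    Polynomial.C Polynomial.X * Polynomial.X + Polynomial.C (Polynomial.C e) with hF4def
  haveI hdom4 : IsDomain (Polynomial (Polynomial (Bz K ⧸ I₀)) ⧸ Ideal.span {F4}) :=
    isDomain_quot_C_mul_X_add_C Polynomial.prime_X hce
  -- the equivalence ε
  set J1 : Ideal (Bx K) := I₀.map (Polynomial.C) with hJ1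
  have hJ1span : J1 = Ideal.span {Polynomial.C (G2 K)} := by
    rw [hJ1, hI₀, Ideal.map_span, Set.image_singleton]
  have hJ2span : J1.map Polynomial.C = Ideal.span {G3 K} := by
    rw [hJ1span, Ideal.map_span, Set.image_singleton, G3]
  let εa := I₀.polynomialQuotientEquivQuotientPolynomial
  let εb := Polynomial.mapEquiv εa
  let εc := J1.polynomialQuotientEquivQuotientPolynomial
  let ε : Polynomial (Polynomial (Bz K ⧸ I₀)) ≃+* (T4 K ⧸ Ideal.span {G3 K}) :=
    (εb.trans εc).trans (Ideal.quotEquivOfEq hJ2span)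
  have hcomp : (εa : Polynomial (Bz K ⧸ I₀) →+* Bx K ⧸ J1).comp
      (Polynomial.mapRingHom (Ideal.Quotient.mk I₀)) = Ideal.Quotient.mk J1 := by
    refine RingHom.ext fun q => ?_
    simp only [RingHom.coe_comp, Function.comp_apply, Polynomial.coe_mapRingHom, RingHom.coe_coe]
    exact I₀.polynomialQuotientEquivQuotientPolynomial_map_mk q
  have hF4map : F4 = (F3 K).map (Polynomial.mapRingHom (Ideal.Quotient.mk I₀)) := by
    rw [hF4def, F3, he]
    simp [Polynomial.map_add, Polynomial.map_mul]
  have hεF4 : ε F4 = Ideal.Quotient.mk _ (F3 K) := by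
    show (Ideal.quotEquivOfEq hJ2span) (εc (εb F4)) = _
    rw [hF4map]
    have h1 : εb ((F3 K).map (Polynomial.mapRingHom (Ideal.Quotient.mk I₀)))
        = (F3 K).map (Ideal.Quotient.mk J1) := by
      rw [Polynomial.mapEquiv_apply, Polynomial.map_map]
      rw [hcomp]
    rw [h1]
    rw [show εc ((F3 K).map (Ideal.Quotient.mk J1))
        = Ideal.Quotient.mk _ (F3 K) from
      J1.polynomialQuotientEquivQuotientPolynomial_map_mk (F3 K)]
    rfl
  -- assemble
  have hFG : Ideal.span ({F3 K, G3 K} : Set (T4 K)) =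
      (Ideal.span {Fpoly K, Gpoly K}).map (Φ K : MvPolynomial (Fin 11) K →+* T4 K) := by
    rw [Ideal.map_span, Set.image_insert_eq, Set.image_singleton]
    simp only [RingHom.coe_coe]
    rw [Phi_F, Phi_G]
  let e1 : (MvPolynomial (Fin 11) K ⧸ Ideal.span {Fpoly K, Gpoly K}) ≃+*
      (T4 K ⧸ Ideal.span {F3 K, G3 K}) :=
    Ideal.quotientEquiv _ _ (Φ K) hFG
  have hsup : Ideal.span ({F3 K, G3 K} : Set (T4 K)) =
      Ideal.span {G3 K} ⊔ Ideal.span {F3 K} := by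
    rw [Ideal.span_insert, sup_comm]
  have hmapspan : (Ideal.span {F3 K}).map (Ideal.Quotient.mk (Ideal.span {G3 K}))
      = Ideal.span {Ideal.Quotient.mk (Ideal.span {G3 K}) (F3 K)} := by
    rw [Ideal.map_span, Set.image_singleton]
  let e3 : (Polynomial (Polynomial (Bz K ⧸ I₀)) ⧸ Ideal.span {F4}) ≃+*
      ((T4 K ⧸ Ideal.span {G3 K}) ⧸
        (Ideal.span {F3 K}).map (Ideal.Quotient.mk (Ideal.span {G3 K}))) :=
    Ideal.quotientEquiv _ _ ε (by
      rw [hmapspan, Ideal.map_span, Set.image_singleton]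
      simp only [RingHom.coe_coe]
      rw [hεF4])
  haveI d1 : IsDomain ((T4 K ⧸ Ideal.span {G3 K}) ⧸
      (Ideal.span {F3 K}).map (Ideal.Quotient.mk (Ideal.span {G3 K}))) :=
    MulEquiv.isDomain _ e3.symm.toMulEquiv
  haveI d2 : IsDomain (T4 K ⧸ (Ideal.span {G3 K} ⊔ Ideal.span {F3 K})) :=
    MulEquiv.isDomain _ (DoubleQuot.quotQuotEquivQuotSup
      (Ideal.span {G3 K}) (Ideal.span {F3 K})).symm.toMulEquiv
  haveI d3 : IsDomain (T4 K ⧸ Ideal.span ({F3 K, G3 K} : Set (T4 K))) :=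
    MulEquiv.isDomain _ (Ideal.quotEquivOfEq hsup).toMulEquiv
  exact MulEquiv.isDomain _ e1.toMulEquiv
end

section
/- Let K be an algebraically closed field of characteristic zero, and in the polynomial ring K[T₁, …, T₁₁] set F = T₃T₈ + T₄T₉ + T₁T₇, G = T₅T₉ + T₆T₁₁ + T₂T₇, and H = T₇ + T₁T₁₁² + T₂T₈T₁₁ + T₂T₁₀² + T₂T₈T₉. Then the quotient ring K[T₁, …, T₁₁]/(F, G, H) is an integral domain (equivalently, the affine variety {F = G = H = 0} ⊂ K¹¹ is irreducible and reduced). -/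
open MvPolynomial

/-- `H = T₇ + T₁T₁₁² + T₂T₈T₁₁ + T₂T₁₀² + T₂T₈T₉`. -/
noncomputable def Hpoly (K : Type*) [Field K] : MvPolynomial (Fin 11) K :=
  X 6 + X 0 * X 10 ^ 2 + X 1 * X 7 * X 10 + X 1 * X 9 ^ 2 + X 1 * X 7 * X 8

set_option linter.unusedSectionVars false
set_option maxHeartbeats 1000000
set_option synthInstance.maxHeartbeats 400000

namespace FGH
variable {R : Type*} [CommRing R] [IsDomain R] {n : ℕ}

noncomputable def sub (i : Fin n) (t : MvPolynomial (Fin n) R) :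
    MvPolynomial (Fin n) R →+* MvPolynomial (Fin n) R :=
  eval₂Hom C (Function.update X i t)

@[simp] lemma sub_C (i : Fin n) (t : MvPolynomial (Fin n) R) (a : R) : sub i t (C a) = C a := by
  simp [sub]

@[simp] lemma sub_X_same (i : Fin n) (t : MvPolynomial (Fin n) R) : sub i t (X i) = t := by
  simp [sub]

@[simp] lemma sub_X_ne (i : Fin n) (t : MvPolynomial (Fin n) R) {k : Fin n} (h : k ≠ i) :
    sub i t (X k) = X k := by
  simp [sub, Function.update_apply, h]

lemma dvd_sub_sub (i : Fin n) (t : MvPolynomial (Fin n) R) (p : MvPolynomial (Fin n) R) :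
    (X i - t) ∣ p - sub i t p := by
  induction p using MvPolynomial.induction_on with
  | C a => simp
  | add p q hp hq =>
      have : p + q - sub i t (p + q) = (p - sub i t p) + (q - sub i t q) := by
        rw [map_add]; ring
      rw [this]; exact dvd_add hp hq
  | mul_X p k hp =>
      have : p * X k - sub i t (p * X k)
          = (p - sub i t p) * X k + sub i t p * (X k - sub i t (X k)) := by
        rw [map_mul]; ring
      rw [this]
      refine dvd_add (Dvd.dvd.mul_right hp _) (Dvd.dvd.mul_left ?_ _)
      rcases eq_or_ne k i with rfl | h
      · simp
      · simp [h]

lemma sub_sub_self (i : Fin n) (t : MvPolynomial (Fin n) R) (ht : sub i t t = t)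
    (p : MvPolynomial (Fin n) R) : sub i t (sub i t p) = sub i t p := by
  have h : (sub i t).comp (sub i t) = (sub i t : MvPolynomial (Fin n) R →+* _) := by
    apply MvPolynomial.ringHom_ext
    · intro r; simp
    · intro k
      rcases eq_or_ne k i with rfl | h
      · simpa using ht
      · simp [h]
  exact DFunLike.congr_fun h p

section PrimeLinear

variable (i j : Fin n) (m : MvPolynomial (Fin n) R)

local notation "A" => MvPolynomial (Fin n) R
local notation "FA" => FractionRing (MvPolynomial (Fin n) R)

/-- the map eliminating `X i` using the relation `X i * X j = m`. -/
noncomputable def philin : MvPolynomial (Fin n) R →+* FractionRing (MvPolynomial (Fin n) R) :=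
  eval₂Hom ((algebraMap (MvPolynomial (Fin n) R)
      (FractionRing (MvPolynomial (Fin n) R))).comp C)
    (Function.update
      (fun k => algebraMap (MvPolynomial (Fin n) R) (FractionRing (MvPolynomial (Fin n) R)) (X k)) i
      (algebraMap (MvPolynomial (Fin n) R) (FractionRing (MvPolynomial (Fin n) R)) m /
        algebraMap (MvPolynomial (Fin n) R) (FractionRing (MvPolynomial (Fin n) R)) (X j)))

variable {i j m}

@[simp] lemma philin_C (a : R) : philin i j m (C a) = algebraMap A FA (C a) := by
  simp [philin]

@[simp] lemma philin_X_ne {k : Fin n} (h : k ≠ i) :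
    philin i j m (X k) = algebraMap A FA (X k) := by
  simp [philin, Function.update_apply, h]

lemma philin_X_same :
    philin i j m (X i) = algebraMap A FA m / algebraMap A FA (X j) := by
  simp [philin]

lemma philin_of_fixed {q : A} (hq : sub i 0 q = q) :
    philin i j m q = algebraMap A FA q := by
  have h : (philin i j m).comp (sub i 0) = (algebraMap A FA).comp (sub i 0) := by
    apply MvPolynomial.ringHom_ext
    · intro r; simp
    · intro k
      rcases eq_or_ne k i with rfl | h
      · simp
      · simp [h]
  calc philin i j m q = (philin i j m).comp (sub i 0) q := by rw [RingHom.comp_apply, hq]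
    _ = (algebraMap A FA).comp (sub i 0) q := by rw [h]
    _ = algebraMap A FA q := by rw [RingHom.comp_apply, hq]

variable (hij : i ≠ j) (hmi : sub i 0 m = m)

lemma amX_ne_zero (k : Fin n) : algebraMap A FA (X k) ≠ 0 := by
  simp [IsFractionRing.to_map_eq_zero_iff, MvPolynomial.X_ne_zero]

include hij hmi in
lemma philin_P : philin i j m (X i * X j - m) = 0 := by
  rw [map_sub, map_mul, philin_X_same, philin_X_ne hij.symm, philin_of_fixed hmi]
  field_simp
  ring

include hij hmi in
lemma philin_span {z : MvPolynomial (Fin n) R} (hz : z ∈ Ideal.span {X i * X j - m}) :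
    philin i j m z = 0 := by
  obtain ⟨k, rfl⟩ := Ideal.mem_span_singleton.mp hz
  rw [map_mul, philin_P hij hmi, zero_mul]

include hij hmi in
lemma philin_nf (p : MvPolynomial (Fin n) R) :
    ∃ (N : ℕ) (r : MvPolynomial (Fin n) R),
      philin i j m r = algebraMap A FA r ∧
      X j ^ N * p - r ∈ Ideal.span {X i * X j - m} := by
  have hXj : philin i j m (X j) = algebraMap A FA (X j) := philin_X_ne hij.symm
  induction p using MvPolynomial.induction_on with
  | C a =>
      exact ⟨0, C a, philin_C a, by simp⟩
  | add p q hp hq =>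
      obtain ⟨N₁, r₁, hr₁, h₁⟩ := hp
      obtain ⟨N₂, r₂, hr₂, h₂⟩ := hq
      refine ⟨N₁ + N₂, X j ^ N₂ * r₁ + X j ^ N₁ * r₂, ?_, ?_⟩
      · simp only [map_add, map_mul, map_pow, hr₁, hr₂, hXj]
      · have : X j ^ (N₁ + N₂) * (p + q) - (X j ^ N₂ * r₁ + X j ^ N₁ * r₂)
            = X j ^ N₂ * (X j ^ N₁ * p - r₁) + X j ^ N₁ * (X j ^ N₂ * q - r₂) := by ring
        rw [this]
        exact add_mem (Ideal.mul_mem_left _ _ h₁) (Ideal.mul_mem_left _ _ h₂)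
  | mul_X p k hp =>
      obtain ⟨N, r, hr, h⟩ := hp
      rcases eq_or_ne k i with rfl | hk
      · refine ⟨N + 1, r * m, ?_, ?_⟩
        · rw [map_mul, hr, map_mul]
          congr 1
          rw [philin_of_fixed hmi]
        · have : X j ^ (N + 1) * (p * X k) - r * m
              = (X j ^ N * p - r) * (X k * X j) + r * (X k * X j - m) := by ring
          rw [this]
          exact add_mem (Ideal.mul_mem_right _ _ h)
            (Ideal.mul_mem_left _ _ (Ideal.subset_span rfl))
      · refine ⟨N, r * X k, ?_, ?_⟩
        · rw [map_mul, hr, philin_X_ne hk, map_mul]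
        · have : X j ^ N * (p * X k) - r * X k = (X j ^ N * p - r) * X k := by ring
          rw [this]
          exact Ideal.mul_mem_right _ _ h

variable (hmj : sub j 0 m ≠ 0)

include hij hmj in
lemma reg_linear {q : MvPolynomial (Fin n) R}
    (hq : X j * q ∈ Ideal.span {X i * X j - m}) : q ∈ Ideal.span {X i * X j - m} := by
  obtain ⟨k, hk⟩ := Ideal.mem_span_singleton.mp hq
  have h0 : sub j 0 (X j * q) = sub j 0 ((X i * X j - m) * k) := by rw [hk]
  rw [map_mul, map_mul, sub_X_same, zero_mul, map_sub, map_mul, sub_X_same,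
    mul_zero, zero_sub] at h0
  have hk0 : sub j 0 k = 0 := by
    rcases mul_eq_zero.mp h0.symm with h | h
    · exact absurd (neg_eq_zero.mp h) hmj
    · exact h
  have : X j ∣ k := by
    have := dvd_sub_sub j 0 k
    rw [sub_zero, hk0, sub_zero] at this
    exact this
  obtain ⟨k₁, rfl⟩ := this
  refine Ideal.mem_span_singleton.mpr ⟨k₁, ?_⟩
  have hXj : (X j : MvPolynomial (Fin n) R) ≠ 0 := MvPolynomial.X_ne_zero j
  apply mul_left_cancel₀ hXj
  rw [hk]; ring

include hij hmi hmj in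
lemma ker_philin {p : MvPolynomial (Fin n) R} (hp : philin i j m p = 0) :
    p ∈ Ideal.span {X i * X j - m} := by
  obtain ⟨N, r, hr, h⟩ := philin_nf hij hmi p
  have h2 : philin i j m (X j ^ N * p - r) = 0 := philin_span hij hmi h
  rw [map_sub, map_mul, map_pow, hp, mul_zero, zero_sub, neg_eq_zero, hr] at h2
  have hr0 : r = 0 := IsFractionRing.injective A FA (by simpa using h2)
  rw [hr0, sub_zero] at h
  clear hr h2 hr0 hp
  induction N with
  | zero => simpa using h
  | succ N ih =>
      apply ih
      apply reg_linear hij hmj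
      have : X j * (X j ^ N * p) = X j ^ (N + 1) * p := by ring
      rw [this]; exact h

include hij hmi hmj in
lemma prime_linear : Prime (X i * X j - m) := by
  have hP0 : (X i * X j - m) ≠ 0 := by
    intro h
    apply hmj
    have : sub j 0 (X i * X j - m) = 0 := by rw [h, map_zero]
    rw [map_sub, map_mul, sub_X_same, mul_zero, zero_sub, neg_eq_zero] at this
    exact this
  rw [← Ideal.span_singleton_prime hP0]
  constructor
  · intro h
    have h1 : philin i j m 1 = 0 := philin_span hij hmi (h ▸ Submodule.mem_top)
    rw [map_one] at h1
    exact one_ne_zero h1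
  · intro a b hab
    have := philin_span hij hmi hab
    rw [map_mul] at this
    rcases mul_eq_zero.mp this with h | h
    · exact Or.inl (ker_philin hij hmi hmj h)
    · exact Or.inr (ker_philin hij hmi hmj h)

include hij hmi hmj in
lemma not_dvd_linear {g : MvPolynomial (Fin n) R} (hgi : sub i 0 g = g) (hg : g ≠ 0) :
    ¬ (X i * X j - m) ∣ g := by
  rintro ⟨k, rfl⟩
  apply hg
  have : philin i j m ((X i * X j - m) * k) = 0 := by
    rw [map_mul, philin_P hij hmi, zero_mul]
  rw [philin_of_fixed hgi] at this
  exact IsFractionRing.injective A FA (by simpa using this)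

end PrimeLinear
end FGH
namespace FGH
section Descent
variable {A : Type*} [CommRing A] [IsDomain A]

lemma syz (τ : A →+* A) {F₀ G₀ H₀ F₁ G₁ : A}
    (hdvd : ∀ p : A, H₀ ∣ p - τ p)
    (hF : τ F₀ = F₁) (hG : τ G₀ = G₁) (hH : τ H₀ = 0)
    (hp : Prime F₁) (hnd : ¬ F₁ ∣ G₁) (h0 : H₀ ≠ 0)
    {α β γ : A} (rel : α * F₀ + β * G₀ + γ * H₀ = 0) :
    ∃ u v t : A, α = u * G₀ + v * H₀ ∧ β = -(u * F₀) + t * H₀ ∧ γ = -(v * F₀) - t * G₀ := by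
  have rel1 : τ α * F₁ + τ β * G₁ = 0 := by
    have h := congrArg τ rel
    rw [map_add, map_add, map_mul, map_mul, map_mul, hF, hG, hH, mul_zero, add_zero,
      map_zero] at h
    exact h
  have hdvd1 : F₁ ∣ τ β * G₁ := ⟨-(τ α), by linear_combination rel1⟩
  have hdvdβ : F₁ ∣ τ β := (hp.dvd_or_dvd hdvd1).resolve_right hnd
  obtain ⟨nn, hn⟩ := hdvdβ
  have hτα : τ α = -(nn * G₁) := by
    have hz : F₁ * (τ α + nn * G₁) = 0 := by linear_combination rel1 - G₁ * hn
    rcases mul_eq_zero.mp hz with h | h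
    · exact absurd h hp.ne_zero
    · linear_combination h
  obtain ⟨Aa, hA⟩ := hdvd α
  obtain ⟨Bb, hB⟩ := hdvd β
  obtain ⟨Wg, hWg⟩ := hdvd G₀
  obtain ⟨Wf, hWf⟩ := hdvd F₀
  refine ⟨-nn, Aa + nn * Wg, Bb - nn * Wf, ?_, ?_, ?_⟩
  · -- α = -nn * G₀ + (Aa + nn*Wg) * H₀
    have hG' : τ G₀ = G₀ - H₀ * Wg := by linear_combination -hWg
    linear_combination hA + hτα - nn * hG' + nn * hG
  · have hF' : τ F₀ = F₀ - H₀ * Wf := by linear_combination -hWf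
    linear_combination hB + hn + nn * hF' - nn * hF
  · -- γ = -(v F₀) - t G₀
    have hz : H₀ * (γ + (Aa + nn * Wg) * F₀ + (Bb - nn * Wf) * G₀) = 0 := by
      have e1 : α = -nn * G₀ + (Aa + nn * Wg) * H₀ := by
        have hG' : τ G₀ = G₀ - H₀ * Wg := by linear_combination -hWg
        linear_combination hA + hτα - nn * hG' + nn * hG
      have e2 : β = -(-nn * F₀) + (Bb - nn * Wf) * H₀ := by
        have hF' : τ F₀ = F₀ - H₀ * Wf := by linear_combination -hWf
        linear_combination hB + hn + nn * hF' - nn * hF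
      linear_combination rel - F₀ * e1 - G₀ * e2
    rcases mul_eq_zero.mp hz with h | h
    · exact absurd h h0
    · linear_combination h
end Descent

section Reg3
variable {R : Type*} [CommRing R] [IsDomain R] {n : ℕ}

lemma mem_span_triple {F G H z : MvPolynomial (Fin n) R}
    (h : z ∈ Ideal.span {F, G, H}) :
    ∃ α β γ, z = α * F + β * G + γ * H := by
  obtain ⟨α, w, hw, hz⟩ := Submodule.mem_span_insert.mp h
  obtain ⟨β, γ, hw2⟩ := Ideal.mem_span_pair.mp hw
  exact ⟨α, β, γ, by rw [hz, ← hw2, smul_eq_mul]; ring⟩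

lemma span_triple_mem {F G H : MvPolynomial (Fin n) R} (α β γ : MvPolynomial (Fin n) R) :
    α * F + β * G + γ * H ∈ Ideal.span {F, G, H} := by
  refine add_mem (add_mem ?_ ?_) ?_ <;>
    exact Ideal.mul_mem_left _ _ (Ideal.subset_span (by simp))

lemma reg3 (j0 : Fin n) (τ : MvPolynomial (Fin n) R →+* MvPolynomial (Fin n) R)
    {F G H F₀ G₀ H₀ F₁ G₁ : MvPolynomial (Fin n) R}
    (hσF : sub j0 0 F = F₀) (hσG : sub j0 0 G = G₀) (hσH : sub j0 0 H = H₀)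
    (hσF₀ : sub j0 0 F₀ = F₀) (hσG₀ : sub j0 0 G₀ = G₀) (hσH₀ : sub j0 0 H₀ = H₀)
    (hτdvd : ∀ p, H₀ ∣ p - τ p) (hτF : τ F₀ = F₁) (hτG : τ G₀ = G₁) (hτH : τ H₀ = 0)
    (hp : Prime F₁) (hnd : ¬ F₁ ∣ G₁) (h0 : H₀ ≠ 0)
    {q : MvPolynomial (Fin n) R} (hq : X j0 * q ∈ Ideal.span {F, G, H}) :
    q ∈ Ideal.span {F, G, H} := by
  obtain ⟨α, β, γ, hcomb⟩ := mem_span_triple hq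
  set σ := (sub j0 0 : MvPolynomial (Fin n) R →+* MvPolynomial (Fin n) R) with hσdef
  have idem : ∀ p, σ (σ p) = σ p := sub_sub_self j0 0 (map_zero _)
  have rel : σ α * F₀ + σ β * G₀ + σ γ * H₀ = 0 := by
    have h := congrArg σ hcomb
    rw [map_mul, map_add, map_add, map_mul, map_mul, map_mul, hσF, hσG, hσH] at h
    have hj : σ (X j0) = 0 := by simp [hσdef]
    rw [hj, zero_mul] at h
    exact h.symm
  obtain ⟨u, v, t, e1, e2, e3⟩ := syz τ hτdvd hτF hτG hτH hp hnd h0 rel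
  -- σ-ify u v t
  have e1' : σ α = σ u * G₀ + σ v * H₀ := by
    have h := congrArg σ e1
    rw [map_add, map_mul, map_mul, hσG₀, hσH₀, idem] at h
    exact h
  have e2' : σ β = -(σ u * F₀) + σ t * H₀ := by
    have h := congrArg σ e2
    rw [map_add, map_neg, map_mul, map_mul, hσF₀, hσH₀, idem] at h
    exact h
  have e3' : σ γ = -(σ v * F₀) - σ t * G₀ := by
    have h := congrArg σ e3
    rw [map_sub, map_neg, map_mul, map_mul, hσF₀, hσG₀, idem] at h
    exact h
  have hdvd0 : ∀ p : MvPolynomial (Fin n) R, σ p = 0 → X j0 ∣ p := by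
    intro p hp0
    have := dvd_sub_sub j0 0 p
    rw [sub_zero, ← hσdef] at this
    rw [hp0, sub_zero] at this
    exact this
  have hα : X j0 ∣ α - (σ u * G + σ v * H) := by
    apply hdvd0
    rw [map_sub, map_add, map_mul, map_mul, idem, idem, hσG, hσH, e1']
    ring
  have hβ : X j0 ∣ β - (-(σ u * F) + σ t * H) := by
    apply hdvd0
    rw [map_sub, map_add, map_neg, map_mul, map_mul, idem, idem, hσF, hσH, e2']
    ring
  have hγ : X j0 ∣ γ - (-(σ v * F) - σ t * G) := by
    apply hdvd0
    rw [map_sub, map_sub, map_neg, map_mul, map_mul, idem, idem, hσF, hσG, e3']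
    ring
  obtain ⟨α₁, hα₁⟩ := hα
  obtain ⟨β₁, hβ₁⟩ := hβ
  obtain ⟨γ₁, hγ₁⟩ := hγ
  have key : X j0 * q = X j0 * (α₁ * F + β₁ * G + γ₁ * H) := by
    linear_combination hcomb + F * hα₁ + G * hβ₁ + H * hγ₁
  have hq' : q = α₁ * F + β₁ * G + γ₁ * H :=
    mul_left_cancel₀ (MvPolynomial.X_ne_zero j0) key
  rw [hq']
  exact span_triple_mem _ _ _

end Reg3

end FGH

namespace FGH
section Main
variable (K : Type*) [Field K] [CharZero K]

local notation "A" => MvPolynomial (Fin 11) K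
local notation "FA" => FractionRing (MvPolynomial (Fin 11) K)
local notation "am" => algebraMap (MvPolynomial (Fin 11) K) (FractionRing (MvPolynomial (Fin 11) K))
local notation "I" => Ideal.span {Fpoly K, Gpoly K, Hpoly K}

/-- `h`, with `Hpoly = X 6 + h`. -/
noncomputable def hpol : MvPolynomial (Fin 11) K :=
  X 0 * X 10 ^ 2 + X 1 * X 7 * X 10 + X 1 * X 9 ^ 2 + X 1 * X 7 * X 8

lemma ne_zero_of_eval {p : MvPolynomial (Fin 11) K} (pt : Fin 11 → K) {c : K}
    (hp : eval pt p = c) (hc : c ≠ 0) : p ≠ 0 := by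
  intro h0
  rw [h0, map_zero] at hp
  exact hc hp.symm

/-! ### Regularity of `X 7` modulo `I` -/

lemma regX7 {q : A} (hq : X 7 * q ∈ I) : q ∈ I := by
  have hm8 : sub 8 (0:A) (X 0^2 * X 10^2 + X 0 * X 1 * X 9^2)
      = X 0^2 * X 10^2 + X 0 * X 1 * X 9^2 := by simp [sub, Function.update_apply]
  have hmne : (X 0^2 * X 10^2 + X 0 * X 1 * X 9^2 : A) ≠ 0 :=
    ne_zero_of_eval K (fun _ => 1) (c := 2) (by simp; norm_num) (by norm_num)
  have hprime : Prime ((X 3 : A) * X 8 - (X 0^2 * X 10^2 + X 0 * X 1 * X 9^2)) := by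
    apply prime_linear (by decide)
    · simp [sub, Function.update_apply]
    · rw [hm8]; exact hmne
  have hnd : ¬ ((X 3 : A) * X 8 - (X 0^2 * X 10^2 + X 0 * X 1 * X 9^2)) ∣
      (X 4 * X 8 + X 5 * X 10 - (X 0 * X 1 * X 10^2 + X 1^2 * X 9^2)) := by
    apply not_dvd_linear (by decide)
    · simp [sub, Function.update_apply]
    · rw [hm8]; exact hmne
    · simp [sub, Function.update_apply]
    · apply ne_zero_of_eval K (fun k => if k = 0 ∨ k = 1 then 0 else 1) (c := 2)
        (by norm_num [show ¬((4:Fin 11) = 0 ∨ (4:Fin 11) = 1) from by decide,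
          show ¬((8:Fin 11) = 0 ∨ (8:Fin 11) = 1) from by decide,
          show ¬((5:Fin 11) = 0 ∨ (5:Fin 11) = 1) from by decide,
          show ¬((10:Fin 11) = 0 ∨ (10:Fin 11) = 1) from by decide,
          show ¬((9:Fin 11) = 0 ∨ (9:Fin 11) = 1) from by decide]) (by norm_num)
  refine reg3 7 (sub 6 (-(X 0 * X 10^2 + X 1 * X 9^2)))
    (F₀ := X 3 * X 8 + X 0 * X 6) (G₀ := Gpoly K)
    (H₀ := X 6 + X 0 * X 10^2 + X 1 * X 9^2)
    (F₁ := X 3 * X 8 - (X 0^2 * X 10^2 + X 0 * X 1 * X 9^2))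
    (G₁ := X 4 * X 8 + X 5 * X 10 - (X 0 * X 1 * X 10^2 + X 1^2 * X 9^2))
    ?_ ?_ ?_ ?_ ?_ ?_ ?_ ?_ ?_ ?_ hprime hnd ?_ hq
  · -- sub 7 0 Fpoly = F₀
    simp [Fpoly, sub, Function.update_apply]
  · simp [Gpoly, sub, Function.update_apply]
  · simp [Hpoly, sub, Function.update_apply]
  · simp [sub, Function.update_apply]
  · simp [Gpoly, sub, Function.update_apply]
  · simp [sub, Function.update_apply]
  · -- dvd
    intro p
    have := dvd_sub_sub 6 (-(X 0 * X 10^2 + X 1 * X 9^2)) p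
    rwa [sub_neg_eq_add, ← add_assoc] at this
  · -- τ F₀ = F₁
    rw [show sub 6 (-((X 0:A) * X 10^2 + X 1 * X 9^2)) (X 3 * X 8 + X 0 * X 6)
      = X 3 * X 8 + X 0 * (-(X 0 * X 10^2 + X 1 * X 9^2)) by
        simp [sub, Function.update_apply]]
    ring
  · rw [show sub 6 (-((X 0:A) * X 10^2 + X 1 * X 9^2)) (Gpoly K)
      = X 4 * X 8 + X 5 * X 10 + X 1 * (-(X 0 * X 10^2 + X 1 * X 9^2)) by
        simp [Gpoly, sub, Function.update_apply]]
    ring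
  · rw [show sub 6 (-((X 0:A) * X 10^2 + X 1 * X 9^2)) (X 6 + X 0 * X 10^2 + X 1 * X 9^2)
      = -(X 0 * X 10^2 + X 1 * X 9^2) + X 0 * X 10^2 + X 1 * X 9^2 by
        simp [sub, Function.update_apply]]
    ring
  · -- H₀ ≠ 0
    apply ne_zero_of_eval K (fun k => if k = 6 then 1 else 0) (c := 1)
      (by norm_num [show ¬((0:Fin 11) = 6) from by decide,
        show ¬((10:Fin 11) = 6) from by decide,
        show ¬((1:Fin 11) = 6) from by decide,
        show ¬((9:Fin 11) = 6) from by decide]) (by norm_num)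

/-! ### Regularity of `X 8` modulo `I` -/

lemma regX8 {q : A} (hq : X 8 * q ∈ I) : q ∈ I := by
  have hm7 : sub 7 (0:A) (X 0^2 * X 10^2 + X 0 * X 1 * X 7 * X 10 + X 0 * X 1 * X 9^2)
      = X 0^2 * X 10^2 + X 0 * X 1 * X 9^2 := by simp [sub, Function.update_apply]
  have hmne : (X 0^2 * X 10^2 + X 0 * X 1 * X 9^2 : A) ≠ 0 :=
    ne_zero_of_eval K (fun _ => 1) (c := 2) (by simp; norm_num) (by norm_num)
  have hprime : Prime ((X 2 : A) * X 7
      - (X 0^2 * X 10^2 + X 0 * X 1 * X 7 * X 10 + X 0 * X 1 * X 9^2)) := by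
    apply prime_linear (by decide)
    · simp [sub, Function.update_apply]
    · rw [hm7]; exact hmne
  have hnd : ¬ ((X 2 : A) * X 7
      - (X 0^2 * X 10^2 + X 0 * X 1 * X 7 * X 10 + X 0 * X 1 * X 9^2)) ∣
      (X 5 * X 10 - (X 0 * X 1 * X 10^2 + X 1^2 * X 7 * X 10 + X 1^2 * X 9^2)) := by
    apply not_dvd_linear (by decide)
    · simp [sub, Function.update_apply]
    · rw [hm7]; exact hmne
    · simp [sub, Function.update_apply]
    · apply ne_zero_of_eval K (fun k => if k = 0 ∨ k = 1 then 0 else 1) (c := 1)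
        (by norm_num [show ¬((5:Fin 11) = 0 ∨ (5:Fin 11) = 1) from by decide,
          show ¬((10:Fin 11) = 0 ∨ (10:Fin 11) = 1) from by decide,
          show ¬((7:Fin 11) = 0 ∨ (7:Fin 11) = 1) from by decide,
          show ¬((9:Fin 11) = 0 ∨ (9:Fin 11) = 1) from by decide]) (by norm_num)
  refine reg3 8 (sub 6 (-(X 0 * X 10^2 + X 1 * X 7 * X 10 + X 1 * X 9^2)))
    (F₀ := X 2 * X 7 + X 0 * X 6) (G₀ := X 5 * X 10 + X 1 * X 6)
    (H₀ := X 6 + X 0 * X 10^2 + X 1 * X 7 * X 10 + X 1 * X 9^2)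
    (F₁ := X 2 * X 7 - (X 0^2 * X 10^2 + X 0 * X 1 * X 7 * X 10 + X 0 * X 1 * X 9^2))
    (G₁ := X 5 * X 10 - (X 0 * X 1 * X 10^2 + X 1^2 * X 7 * X 10 + X 1^2 * X 9^2))
    ?_ ?_ ?_ ?_ ?_ ?_ ?_ ?_ ?_ ?_ hprime hnd ?_ hq
  · simp [Fpoly, sub, Function.update_apply]
  · simp [Gpoly, sub, Function.update_apply]
  · simp [Hpoly, sub, Function.update_apply]
  · simp [sub, Function.update_apply]
  · simp [sub, Function.update_apply]
  · simp [sub, Function.update_apply]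
  · intro p
    have := dvd_sub_sub 6 (-(X 0 * X 10^2 + X 1 * X 7 * X 10 + X 1 * X 9^2)) p
    rwa [sub_neg_eq_add, ← add_assoc, ← add_assoc] at this
  · have e : sub 6 (-((X 0:A) * X 10^2 + X 1 * X 7 * X 10 + X 1 * X 9^2))
        (X 2 * X 7 + X 0 * X 6)
        = X 2 * X 7 + X 0 * (-(X 0 * X 10^2 + X 1 * X 7 * X 10 + X 1 * X 9^2)) := by
      simp [sub, Function.update_apply]
    rw [e]; ring
  · have e : sub 6 (-((X 0:A) * X 10^2 + X 1 * X 7 * X 10 + X 1 * X 9^2))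
        (X 5 * X 10 + X 1 * X 6)
        = X 5 * X 10 + X 1 * (-(X 0 * X 10^2 + X 1 * X 7 * X 10 + X 1 * X 9^2)) := by
      simp [sub, Function.update_apply]
    rw [e]; ring
  · have e : sub 6 (-((X 0:A) * X 10^2 + X 1 * X 7 * X 10 + X 1 * X 9^2))
        (X 6 + X 0 * X 10^2 + X 1 * X 7 * X 10 + X 1 * X 9^2)
        = -(X 0 * X 10^2 + X 1 * X 7 * X 10 + X 1 * X 9^2)
          + X 0 * X 10^2 + X 1 * X 7 * X 10 + X 1 * X 9^2 := by
      simp [sub, Function.update_apply]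
    rw [e]; ring
  · apply ne_zero_of_eval K (fun k => if k = 6 then 1 else 0) (c := 1)
      (by norm_num [show ¬((0:Fin 11) = 6) from by decide,
        show ¬((10:Fin 11) = 6) from by decide,
        show ¬((1:Fin 11) = 6) from by decide,
        show ¬((7:Fin 11) = 6) from by decide,
        show ¬((9:Fin 11) = 6) from by decide]) (by norm_num)

/-! ### The substitution homomorphism into the fraction field -/

noncomputable def phi : MvPolynomial (Fin 11) K →+* FractionRing (MvPolynomial (Fin 11) K) :=
  eval₂Hom ((algebraMap (MvPolynomial (Fin 11) K)
      (FractionRing (MvPolynomial (Fin 11) K))).comp C)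
    (fun k =>
      if k = 2 then (am (X 0) * am (hpol K) - am (X 3) * am (X 8)) / am (X 7)
      else if k = 4 then (am (X 1) * am (hpol K) - am (X 5) * am (X 10)) / am (X 8)
      else if k = 6 then -(am (hpol K))
      else am (X k))

lemma phi_C (a : K) : phi K (C a) = am (C a) := by simp [phi]

lemma phi_X_2 : phi K (X 2) = (am (X 0) * am (hpol K) - am (X 3) * am (X 8)) / am (X 7) := by
  simp [phi]

lemma phi_X_4 : phi K (X 4) = (am (X 1) * am (hpol K) - am (X 5) * am (X 10)) / am (X 8) := by
  simp [phi]

lemma phi_X_6 : phi K (X 6) = -(am (hpol K)) := by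
  norm_num [phi, show ¬((6:Fin 11) = 2) from by decide, show ¬((6:Fin 11) = 4) from by decide]

lemma phi_X_ne {k : Fin 11} (h2 : k ≠ 2) (h4 : k ≠ 4) (h6 : k ≠ 6) :
    phi K (X k) = am (X k) := by
  simp [phi, h2, h4, h6]

lemma amX_ne (k : Fin 11) : am (X k) ≠ 0 := by
  simp [IsFractionRing.to_map_eq_zero_iff, MvPolynomial.X_ne_zero]

lemma phi_hpol : phi K (hpol K) = am (hpol K) := by
  rw [hpol]
  simp only [map_add, map_mul, map_pow]
  rw [phi_X_ne K (by decide) (by decide) (by decide),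
    phi_X_ne K (by decide) (by decide) (by decide) (k := 1),
    phi_X_ne K (by decide) (by decide) (by decide) (k := 7),
    phi_X_ne K (by decide) (by decide) (by decide) (k := 8),
    phi_X_ne K (by decide) (by decide) (by decide) (k := 9),
    phi_X_ne K (by decide) (by decide) (by decide) (k := 10)]

lemma phi_F : phi K (Fpoly K) = 0 := by
  rw [Fpoly]
  simp only [map_add, map_mul]
  rw [phi_X_2, phi_X_6, phi_X_ne K (by decide) (by decide) (by decide) (k := 7),
    phi_X_ne K (by decide) (by decide) (by decide) (k := 3),
    phi_X_ne K (by decide) (by decide) (by decide) (k := 8),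
    phi_X_ne K (by decide) (by decide) (by decide) (k := 0)]
  field_simp
  ring

lemma phi_G : phi K (Gpoly K) = 0 := by
  rw [Gpoly]
  simp only [map_add, map_mul]
  rw [phi_X_4, phi_X_6, phi_X_ne K (by decide) (by decide) (by decide) (k := 8),
    phi_X_ne K (by decide) (by decide) (by decide) (k := 5),
    phi_X_ne K (by decide) (by decide) (by decide) (k := 10),
    phi_X_ne K (by decide) (by decide) (by decide) (k := 1)]
  field_simp
  ring

lemma phi_H : phi K (Hpoly K) = 0 := by
  have hH : Hpoly K = X 6 + hpol K := by rw [Hpoly, hpol]; ring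
  rw [hH, map_add, phi_X_6, phi_hpol]
  ring

lemma phi_span {z : A} (hz : z ∈ I) : phi K z = 0 := by
  obtain ⟨α, β, γ, rfl⟩ := mem_span_triple hz
  simp only [map_add, map_mul, phi_F, phi_G, phi_H, mul_zero, add_zero, zero_add]

/-! ### Normal form modulo `I` -/

lemma nf_main (p : A) :
    ∃ (N : ℕ) (r : A), phi K r = am r ∧ X 7 ^ N * X 8 ^ N * p - r ∈ I := by
  have hX7 : phi K (X 7) = am (X 7) := phi_X_ne K (by decide) (by decide) (by decide)
  have hX8 : phi K (X 8) = am (X 8) := phi_X_ne K (by decide) (by decide) (by decide)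
  induction p using MvPolynomial.induction_on with
  | C a => exact ⟨0, C a, phi_C K a, by simp⟩
  | add p q hp hq =>
      obtain ⟨N₁, r₁, hr₁, h₁⟩ := hp
      obtain ⟨N₂, r₂, hr₂, h₂⟩ := hq
      refine ⟨N₁ + N₂, X 7 ^ N₂ * X 8 ^ N₂ * r₁ + X 7 ^ N₁ * X 8 ^ N₁ * r₂, ?_, ?_⟩
      · simp only [map_add, map_mul, map_pow, hr₁, hr₂, hX7, hX8]
      · have e : X 7 ^ (N₁ + N₂) * X 8 ^ (N₁ + N₂) * (p + q)
            - (X 7 ^ N₂ * X 8 ^ N₂ * r₁ + X 7 ^ N₁ * X 8 ^ N₁ * r₂)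
            = X 7 ^ N₂ * X 8 ^ N₂ * (X 7 ^ N₁ * X 8 ^ N₁ * p - r₁)
              + X 7 ^ N₁ * X 8 ^ N₁ * (X 7 ^ N₂ * X 8 ^ N₂ * q - r₂) := by ring
        rw [e]
        exact add_mem (Ideal.mul_mem_left _ _ h₁) (Ideal.mul_mem_left _ _ h₂)
  | mul_X p k hp =>
      obtain ⟨N, r, hr, h⟩ := hp
      by_cases hk2 : k = 2
      · subst hk2
        refine ⟨N + 1, X 8 * (r * (X 0 * hpol K - X 3 * X 8)), ?_, ?_⟩
        · simp only [map_mul, map_sub, hr, hX8, phi_hpol,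
            phi_X_ne K (by decide) (by decide) (by decide) (k := 0),
            phi_X_ne K (by decide) (by decide) (by decide) (k := 3)]
        · have e : X 7 ^ (N + 1) * X 8 ^ (N + 1) * (p * X 2)
              - X 8 * (r * (X 0 * hpol K - X 3 * X 8))
              = X 8 * (X 7 * X 2) * (X 7 ^ N * X 8 ^ N * p - r)
                + (X 8 * r) * Fpoly K + (-(X 8 * r * X 0)) * Hpoly K := by
            rw [Fpoly, Hpoly, hpol]; ring
          rw [e]
          refine add_mem (add_mem (Ideal.mul_mem_left _ _ h) ?_) ?_ <;>
            exact Ideal.mul_mem_left _ _ (Ideal.subset_span (by simp))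
      · by_cases hk4 : k = 4
        · subst hk4
          refine ⟨N + 1, X 7 * (r * (X 1 * hpol K - X 5 * X 10)), ?_, ?_⟩
          · simp only [map_mul, map_sub, hr, hX7, phi_hpol,
              phi_X_ne K (by decide) (by decide) (by decide) (k := 1),
              phi_X_ne K (by decide) (by decide) (by decide) (k := 5),
              phi_X_ne K (by decide) (by decide) (by decide) (k := 10)]
          · have e : X 7 ^ (N + 1) * X 8 ^ (N + 1) * (p * X 4)
                - X 7 * (r * (X 1 * hpol K - X 5 * X 10))
                = X 7 * (X 8 * X 4) * (X 7 ^ N * X 8 ^ N * p - r)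
                  + (X 7 * r) * Gpoly K + (-(X 7 * r * X 1)) * Hpoly K := by
              rw [Gpoly, Hpoly, hpol]; ring
            rw [e]
            refine add_mem (add_mem (Ideal.mul_mem_left _ _ h) ?_) ?_ <;>
              exact Ideal.mul_mem_left _ _ (Ideal.subset_span (by simp))
        · by_cases hk6 : k = 6
          · subst hk6
            refine ⟨N, -(r * hpol K), ?_, ?_⟩
            · simp only [map_neg, map_mul, hr, phi_hpol]
            · have e : X 7 ^ N * X 8 ^ N * (p * X 6) - -(r * hpol K)
                  = X 6 * (X 7 ^ N * X 8 ^ N * p - r) + r * Hpoly K := by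
                rw [Hpoly, hpol]; ring
              rw [e]
              exact add_mem (Ideal.mul_mem_left _ _ h)
                (Ideal.mul_mem_left _ _ (Ideal.subset_span (by simp)))
          · refine ⟨N, r * X k, ?_, ?_⟩
            · rw [map_mul, hr, phi_X_ne K hk2 hk4 hk6, map_mul]
            · have e : X 7 ^ N * X 8 ^ N * (p * X k) - r * X k
                  = (X 7 ^ N * X 8 ^ N * p - r) * X k := by ring
              rw [e]
              exact Ideal.mul_mem_right _ _ h

lemma peel {N M : ℕ} {p : A} (h : X 7 ^ N * X 8 ^ M * p ∈ I) : p ∈ I := by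
  induction N generalizing p with
  | zero =>
      induction M generalizing p with
      | zero => simpa using h
      | succ M ihM =>
          have h' : X 8 * (X 8 ^ M * p) ∈ I := by
            have e : X 8 * (X 8 ^ M * p) = X 7 ^ 0 * X 8 ^ (M + 1) * p := by ring
            rw [e]; exact h
          have h8 := regX8 K h'
          exact ihM (by rw [pow_zero, one_mul]; exact h8)
  | succ N ihN =>
      have h' : X 7 * (X 7 ^ N * X 8 ^ M * p) ∈ I := by
        have e : X 7 * (X 7 ^ N * X 8 ^ M * p) = X 7 ^ (N + 1) * X 8 ^ M * p := by ring
        rw [e]; exact h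
      exact ihN (regX7 K h')

lemma ker_phi {p : A} (hp : phi K p = 0) : p ∈ I := by
  obtain ⟨N, r, hr, h⟩ := nf_main K p
  have h2 : phi K (X 7 ^ N * X 8 ^ N * p - r) = 0 := phi_span K h
  rw [map_sub, map_mul, map_mul, map_pow, map_pow, hp, mul_zero, zero_sub, neg_eq_zero,
    hr] at h2
  have hr0 : r = 0 := IsFractionRing.injective A (FractionRing A) (by simpa using h2)
  rw [hr0, sub_zero] at h
  exact peel K h

theorem span_isPrime : (Ideal.span {Fpoly K, Gpoly K, Hpoly K}).IsPrime := by
  constructor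
  · intro htop
    have h1 : phi K 1 = 0 := phi_span K (htop ▸ Submodule.mem_top)
    rw [map_one] at h1
    exact one_ne_zero h1
  · intro a b hab
    have := phi_span K hab
    rw [map_mul] at this
    rcases mul_eq_zero.mp this with h | h
    · exact Or.inl (ker_phi K h)
    · exact Or.inr (ker_phi K h)

end Main
end FGH


/-- The ring `K[T₁, …, T₁₁]/(F, G, H)` is an integral domain: the affine cone
`Ȳ = {F = G = H = 0} ⊂ K¹¹` is irreducible and reduced. -/
theorem quotient_FGH_isDomain (K : Type*) [Field K] [IsAlgClosed K] [CharZero K] :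
    IsDomain (MvPolynomial (Fin 11) K ⧸ Ideal.span {Fpoly K, Gpoly K, Hpoly K}) := by
  rw [Ideal.Quotient.isDomain_iff_prime]
  exact FGH.span_isPrime K
end
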